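/- Let M be an m×m real upper triangular matrix with diagonal entries in [0,1), such that every row except the last sums to 1, the last row is zero, and for all 0 ≤ i < j ≤ m−1 with i+1 < j the ratio M(i,j)/M(i+1,j) equals a value φ_i depending only on i (with M(i+1,j) ≠ 0). Let A = I − M. Then for all i < j, A^{-1}(i,j) = δ_j where δ_j = −A(j−1,j)/(A(j−1,j−1)·A(j,j)), and A^{-1}(i,i) = 1/A(i,i), and A^{-1}(i,j) = 0 for i > j. -/

import Mathlib

/-- The value `δ_j = −A(j−1,j)/(A(j−1,j−1)·A(j,j))` where `A = I − M`. -/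
noncomputable def delta {m : ℕ} (M : Matrix (Fin m) (Fin m) ℝ) (j : Fin m) : ℝ :=
  -(1 - M) ⟨(j : ℕ) - 1, lt_of_le_of_lt (Nat.sub_le _ _) j.isLt⟩ j /
    ((1 - M) ⟨(j : ℕ) - 1, lt_of_le_of_lt (Nat.sub_le _ _) j.isLt⟩
        ⟨(j : ℕ) - 1, lt_of_le_of_lt (Nat.sub_le _ _) j.isLt⟩ *
      (1 - M) j j)

theorem inverse_of_A_explicit (m : ℕ) (hm : 0 < m)
    (M : Matrix (Fin m) (Fin m) ℝ)
    (hut : ∀ i j : Fin m, j < i → M i j = 0)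
    (hdiag : ∀ i : Fin m, 0 ≤ M i i ∧ M i i < 1)
    (hrow : ∀ i : Fin m, (i : ℕ) ≠ m - 1 → ∑ j, M i j = 1)
    (hlast : ∀ j : Fin m, M ⟨m - 1, by omega⟩ j = 0)
    (φ : Fin m → ℝ)
    (hratio : ∀ i j : Fin m, ∀ h : (i : ℕ) + 1 < (j : ℕ),
      M ⟨(i : ℕ) + 1, Nat.lt_trans h j.isLt⟩ j ≠ 0 ∧
        M i j / M ⟨(i : ℕ) + 1, Nat.lt_trans h j.isLt⟩ j = φ i) :
    (∀ i j : Fin m, i < j → (1 - M)⁻¹ i j = delta M j) ∧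
      (∀ i : Fin m, (1 - M)⁻¹ i i = 1 / (1 - M) i i) ∧
      (∀ i j : Fin m, j < i → (1 - M)⁻¹ i j = 0) := by
  classical
  have hdne : ∀ i : Fin m, (1 : ℝ) - M i i ≠ 0 := fun i =>
    ne_of_gt (by have := (hdiag i).2; linarith)
  -- chain of ratios: row i is proportional to row k' beyond column k'
  have chain : ∀ (d : ℕ) (i k' : Fin m), (k' : ℕ) = (i : ℕ) + d →
      ∃ c : ℝ, ∀ j : Fin m, (k' : ℕ) < (j : ℕ) → M i j = c * M k' j := by
    intro d
    induction d with
    | zero =>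
      intro i k' h
      have : i = k' := Fin.ext (by omega)
      exact ⟨1, fun j _ => by rw [this, one_mul]⟩
    | succ n ih =>
      intro i k' h
      have hi1 : (i : ℕ) + 1 < m := by have := k'.isLt; omega
      obtain ⟨c, hc⟩ := ih ⟨(i : ℕ) + 1, hi1⟩ k' (by simp; omega)
      refine ⟨φ i * c, fun j hj => ?_⟩
      have hij : (i : ℕ) + 1 < (j : ℕ) := by omega
      obtain ⟨hne, hdiv⟩ := hratio i j hij
      have h1 : M i j = φ i * M ⟨(i : ℕ) + 1, Nat.lt_trans hij j.isLt⟩ j :=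
        by rw [← hdiv, div_mul_cancel₀ _ hne]
      rw [h1, hc j hj, mul_assoc]
  -- the candidate inverse
  set B : Matrix (Fin m) (Fin m) ℝ := fun i j =>
    if i < j then delta M j else if i = j then 1 / (1 - M i i) else 0 with hB
  have key : (1 - M) * B = 1 := by
    ext i k
    rw [Matrix.sub_mul, Matrix.one_mul, Matrix.sub_apply, Matrix.mul_apply]
    rcases lt_trichotomy i k with hik | hik | hik
    · -- main case i < k
      have hk1 : 1 ≤ (k : ℕ) := by
        rcases Nat.eq_zero_or_pos (k : ℕ) with h0 | h1
        · exfalso; have : (i : ℕ) < (k : ℕ) := hik; omega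
        · exact h1
      set k' : Fin m := ⟨(k : ℕ) - 1, lt_of_le_of_lt (Nat.sub_le _ _) k.isLt⟩ with hk'
      have hk'k : k' < k := by rw [Fin.lt_def]; show (k : ℕ) - 1 < (k : ℕ); omega
      have hk'ne : k' ≠ k := ne_of_lt hk'k
      -- delta unfolded
      have hdelta : delta M k = M k' k / ((1 - M k' k') * (1 - M k k)) := by
        have e1 : (1 - M) k' k = - M k' k := by
          simp [Matrix.sub_apply, Matrix.one_apply_ne hk'ne]
        have e2 : (1 - M) k' k' = 1 - M k' k' := by
          simp [Matrix.sub_apply, Matrix.one_apply_eq]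
        have e3 : (1 - M) k k = 1 - M k k := by
          simp [Matrix.sub_apply, Matrix.one_apply_eq]
        show -(1 - M) k' k / ((1 - M) k' k' * (1 - M) k k) = _
        rw [e1, e2, e3]; ring
      -- get the proportionality constant
      obtain ⟨c, hc⟩ := chain ((k' : ℕ) - (i : ℕ)) i k'
        (by have : (i : ℕ) < (k : ℕ) := hik; simp only [hk']; omega)
      have hik' : ∀ j : Fin m, k ≤ j → M i j = c * M k' j := fun j hj =>
        hc j (by have : (k : ℕ) ≤ (j : ℕ) := hj; omega)
      -- row sum for row k'
      have hk'row : ∑ j, M k' j = 1 := by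
        apply hrow
        have h1 : (k : ℕ) < m := k.isLt
        have h2 : (i : ℕ) < (k : ℕ) := hik
        simp only [hk']; omega
      -- split sums over j < k and j ≥ k
      have hsplit : ∀ f : Fin m → ℝ, ∑ j, f j =
          (∑ j ∈ Finset.univ.filter (fun j => j < k), f j) +
          (∑ j ∈ Finset.univ.filter (fun j => ¬ j < k), f j) := fun f =>
        (Finset.sum_filter_add_sum_filter_not _ _ _).symm
      -- lower part of row k' sum
      have hlow : ∑ j ∈ Finset.univ.filter (fun j => j < k), M k' j = M k' k' := by
        apply Finset.sum_eq_single_of_mem k'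
        · simp [hk'k]
        · intro j hj hjne
          apply hut
          simp only [Finset.mem_filter] at hj
          have h1 : (j : ℕ) < (k : ℕ) := hj.2
          have h2 : (j : ℕ) ≠ (k' : ℕ) := fun h => hjne (Fin.ext h)
          simp only [Fin.lt_def, hk']; simp only [hk'] at h2; omega
      set T' : ℝ := ∑ j ∈ Finset.univ.filter (fun j => ¬ j < k), M k' j with hT'
      have hT'val : T' = 1 - M k' k' := by
        have := hsplit (fun j => M k' j)
        rw [hk'row, hlow] at this
        linarith [this]
      -- row i upper sum
      set T : ℝ := ∑ j ∈ Finset.univ.filter (fun j => ¬ j < k), M i j with hT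
      have hTc : T = c * T' := by
        rw [hT, hT', Finset.mul_sum]
        apply Finset.sum_congr rfl
        intro j hj
        simp only [Finset.mem_filter, not_lt] at hj
        exact hik' j hj.2
      have hMik : M i k = c * M k' k := hik' k le_rfl
      -- row sum for row i
      have hirow : ∑ j, M i j = 1 := by
        apply hrow
        have h1 : (k : ℕ) < m := k.isLt
        have h2 : (i : ℕ) < (k : ℕ) := hik
        omega
      have hlowi : ∑ j ∈ Finset.univ.filter (fun j => j < k), M i j = 1 - T := by
        have := hsplit (fun j => M i j)
        rw [hirow] at this
        rw [hT]; linarith [this]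
      -- compute (M * B) i k
      have hMB : ∑ j, M i j * B j k = (1 - T) * delta M k + M i k * (1 / (1 - M k k)) := by
        rw [hsplit (fun j => M i j * B j k)]
        congr 1
        · rw [← hlowi, Finset.sum_mul]
          apply Finset.sum_congr rfl
          intro j hj
          simp only [Finset.mem_filter] at hj
          rw [hB]; simp only [if_pos hj.2]
        · have hBkk : B k k = 1 / (1 - M k k) := by
            rw [hB]; simp
          rw [← hBkk]
          apply Finset.sum_eq_single_of_mem k
          · simp
          · intro j hj hjne
            simp only [Finset.mem_filter, Finset.mem_univ, true_and, not_lt] at hj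
            have hkj : k < j := lt_of_le_of_ne hj (fun h => hjne h.symm)
            rw [hB]
            simp only [if_neg (not_lt_of_gt hkj), if_neg (ne_of_gt hkj), mul_zero]
      have hBik : B i k = delta M k := by rw [hB]; simp only [if_pos hik]
      rw [hMB, hBik, hdelta]
      have hone : (1 : Matrix (Fin m) (Fin m) ℝ) i k = 0 :=
        Matrix.one_apply_ne (ne_of_lt hik)
      rw [hone]
      have hd1 : (1 : ℝ) - M k' k' ≠ 0 := hdne k'
      have hd2 : (1 : ℝ) - M k k ≠ 0 := hdne k
      rw [hTc, hT'val, hMik]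
      field_simp
      ring
    · -- diagonal
      subst hik
      rw [Matrix.one_apply_eq]
      have hBii : B i i = 1 / (1 - M i i) := by
        rw [hB]; simp
      have : ∑ j, M i j * B j i = M i i * B i i := by
        apply Finset.sum_eq_single_of_mem i (Finset.mem_univ i)
        intro j _ hjne
        rcases lt_or_gt_of_ne hjne with h | h
        · rw [hut i j h, zero_mul]
        · rw [hB]; simp only [if_neg (not_lt_of_gt h), if_neg (ne_of_gt h), mul_zero]
      rw [this, hBii]
      have := hdne i
      field_simp
    · -- below diagonal: i > k
      have hone : (1 : Matrix (Fin m) (Fin m) ℝ) i k = 0 :=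
        Matrix.one_apply_ne (ne_of_gt hik)
      rw [hone]
      have hBik : B i k = 0 := by
        rw [hB]; simp only [if_neg (not_lt_of_gt hik), if_neg (ne_of_gt hik)]
      have : ∑ j, M i j * B j k = 0 := by
        apply Finset.sum_eq_zero
        intro j _
        rcases lt_trichotomy j k with h | h | h
        · rw [hut i j (h.trans hik), zero_mul]
        · subst h
          rw [hut i j hik, zero_mul]
        · rw [hB]; simp only [if_neg (not_lt_of_gt h), if_neg (ne_of_gt h), mul_zero]
      rw [this, hBik]; ring
  have hinv : (1 - M)⁻¹ = B := Matrix.inv_eq_right_inv key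
  refine ⟨?_, ?_, ?_⟩
  · intro i j hij
    rw [hinv, hB]; simp only [if_pos hij]
  · intro i
    rw [hinv, hB]
    simp [Matrix.sub_apply, Matrix.one_apply_eq]
  · intro i j hij
    rw [hinv, hB]
    simp only [if_neg (not_lt_of_gt hij), if_neg (ne_of_gt hij)]
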